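/- Let I be a finite set, and let f : I → V be a function into some set V with f(w) ≠ w for every w ∈ I (assume I ⊆ V). Suppose I₁', I₂' ⊆ I satisfy |I₁'| = |I₂'| and f restricted to I₁' is a bijection onto I₂'. Then there exist subsets I₁'' ⊆ I₁' and I₂'' ⊆ I₂' such that |I₁''| = |I₂''| ≥ |I₁'| / 4 (rounded up), I₁'' ∩ I₂'' = ∅, and f restricted to I₁'' is a bijection onto I₂''. -/

import Mathlib

/-- From a fixed-point-free bijection `f : I₁' → I₂'` between equal-size subsets of `I`
one can extract disjoint matched subsets `I₁'' ⊆ I₁'`, `I₂'' ⊆ I₂'` of size at least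
`⌈|I₁'|/4⌉` on which `f` is still a bijection. -/
theorem stmt_2 {V : Type*} [DecidableEq V] (I I₁ I₂ : Finset V) (f : V → V)
    (hfp : ∀ w ∈ I, f w ≠ w) (h1 : I₁ ⊆ I) (h2 : I₂ ⊆ I)
    (hcard : I₁.card = I₂.card) (hbij : Set.BijOn f ↑I₁ ↑I₂) :
    ∃ I₁' I₂' : Finset V, I₁' ⊆ I₁ ∧ I₂' ⊆ I₂ ∧ I₁'.card = I₂'.card ∧
      (I₁.card + 3) / 4 ≤ I₁'.card ∧ Disjoint I₁' I₂' ∧ Set.BijOn f ↑I₁' ↑I₂' := by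
  classical
  set n := I₁.card with hn
  have hinj : Set.InjOn f ↑I₁ := hbij.injOn
  -- main claim: for each k ≤ (n+3)/4 there is a good set of size k
  have claim : ∀ k, k ≤ (n + 3) / 4 →
      ∃ S : Finset V, S ⊆ I₁ ∧ S.card = k ∧ Disjoint S (S.image f) := by
    intro k
    induction k with
    | zero => intro _; exact ⟨∅, by simp⟩
    | succ k ih =>
      intro hk
      obtain ⟨S, hS1, hS2, hS3⟩ := ih (Nat.le_of_succ_le hk)
      -- n ≥ 1
      have hn1 : 1 ≤ n := by
        by_contra h
        have : n = 0 := by omega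
        simp [this] at hk
      have h3k : 3 * k < n := by
        have h4 : 4 * ((n + 3) / 4) ≤ n + 3 := Nat.mul_div_le _ 4 |>.trans_eq (by ring_nf) |>.trans (le_refl _)
        have hk1 : 1 ≤ (n + 3) / 4 := le_trans (Nat.one_le_iff_ne_zero.mpr (by omega)) hk
        omega
      -- bad set
      set B : Finset V := S ∪ (I₁ ∩ S.image f) ∪ (I₁.filter fun w => f w ∈ S) with hB
      have hBcard : B.card ≤ 3 * k := by
        have c1 : (I₁ ∩ S.image f).card ≤ k := by
          calc (I₁ ∩ S.image f).card ≤ (S.image f).card := Finset.card_le_card Finset.inter_subset_right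
          _ ≤ S.card := Finset.card_image_le
          _ = k := hS2
        have c2 : (I₁.filter fun w => f w ∈ S).card ≤ k := by
          have : (I₁.filter fun w => f w ∈ S).card ≤ S.card := by
            apply Finset.card_le_card_of_injOn f
            · intro x hx
              simp only [Finset.coe_filter, Set.mem_setOf_eq] at hx
              exact hx.2
            · intro x hx y hy hxy
              simp only [Finset.coe_filter, Set.mem_setOf_eq] at hx hy
              exact hinj (by exact_mod_cast hx.1) (by exact_mod_cast hy.1) hxy
          omega
        calc B.card ≤ (S ∪ (I₁ ∩ S.image f)).card + (I₁.filter fun w => f w ∈ S).card :=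
              Finset.card_union_le _ _
        _ ≤ S.card + (I₁ ∩ S.image f).card + (I₁.filter fun w => f w ∈ S).card := by
              have := Finset.card_union_le S (I₁ ∩ S.image f); omega
        _ ≤ 3 * k := by omega
      have hex : ∃ w ∈ I₁, w ∉ B := by
        by_contra h
        push_neg at h
        have : I₁ ⊆ B := fun x hx => h x hx
        have := Finset.card_le_card this
        omega
      obtain ⟨w, hwI, hwB⟩ := hex
      simp only [hB, Finset.mem_union, Finset.mem_inter, Finset.mem_filter, not_or] at hwB
      obtain ⟨⟨hwS, hwIm⟩, hwF⟩ := hwB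
      have hwIm' : w ∉ S.image f := fun h => hwIm ⟨hwI, h⟩
      have hwF' : f w ∉ S := fun h => hwF ⟨hwI, h⟩
      refine ⟨insert w S, Finset.insert_subset hwI hS1, by
        rw [Finset.card_insert_of_notMem hwS, hS2], ?_⟩
      rw [Finset.image_insert]
      rw [Finset.disjoint_left]
      intro a ha hha
      simp only [Finset.mem_insert] at ha hha
      rcases ha with rfl | ha
      · rcases hha with h | h
        · exact hfp a (h1 hwI) h.symm
        · exact hwIm' h
      · rcases hha with h | h
        · exact hwF' (h ▸ ha)
        · exact (Finset.disjoint_left.mp hS3) ha h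
  obtain ⟨S, hS1, hS2, hS3⟩ := claim ((n + 3) / 4) le_rfl
  refine ⟨S, S.image f, hS1, ?_, ?_, by omega, hS3, ?_⟩
  · intro x hx
    simp only [Finset.mem_image] at hx
    obtain ⟨a, ha, rfl⟩ := hx
    exact_mod_cast hbij.mapsTo (by exact_mod_cast hS1 ha)
  · rw [Finset.card_image_of_injOn (hinj.mono (by exact_mod_cast hS1))]
  · rw [Finset.coe_image]
    exact (hinj.mono (by exact_mod_cast hS1)).bijOn_image
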